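/- Let q ≥ 3 be a prime power, m ≥ 4, and write m = r(q-1) + s with r ≥ 0 and 0 ≤ s ≤ q-2. Let δ' be the q-cyclotomic coset leader modulo n = (q^m-1)/(q-1) of n - δ₁, where δ₁ = (q^m - Σ_{t=1}^{q-1} q^(⌈mt/(q-1)⌉-1) - 1)/(q-1). Then δ' > (q^(m-r-1) - 1)/(q-1). -/

import Mathlib

/-- (q-1)*q^(m-1) < q^m - 1 for q ≥ 3, m ≥ 2. -/
private lemma geom_bound (q m : ℕ) (hq : 3 ≤ q) (hm : 2 ≤ m) :
    (q - 1) * q ^ (m - 1) < q ^ m - 1 := by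
  have h1 : q ^ m = q * q ^ (m - 1) := by
    conv_lhs => rw [show m = (m - 1) + 1 by omega]
    rw [pow_succ]; ring
  have h2 : 3 ≤ q ^ (m - 1) := le_trans hq (Nat.le_self_pow (by omega) q)
  have h3 : 3 * q ^ (m - 1) ≤ q * q ^ (m - 1) := Nat.mul_le_mul_right _ (by omega)
  have h4 : (q - 1) * q ^ (m - 1) = q * q ^ (m - 1) - 1 * q ^ (m - 1) := by
    rw [← Nat.sub_mul]
  rw [h4, h1]
  omega

/-- The top exponent: (m*(q-1) + q - 2)/(q-1) = m. -/
private lemma div_top (q m : ℕ) (hq : 3 ≤ q) :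
    (m * (q - 1) + q - 2) / (q - 1) = m := by
  have h : m * (q - 1) + q - 2 = (q - 2) + m * (q - 1) := by omega
  rw [h, Nat.add_mul_div_right _ _ (by omega : 0 < q - 1),
    Nat.div_eq_of_lt (by omega)]
  omega

/-- Monotone upper bound on exponents. -/
private lemma div_le_top (q m t : ℕ) (hq : 3 ≤ q) (ht : t ≤ q - 1) :
    (m * t + q - 2) / (q - 1) ≤ m := by
  calc (m * t + q - 2) / (q - 1)
      ≤ (m * (q - 1) + q - 2) / (q - 1) :=
        Nat.div_le_div_right (by have := Nat.mul_le_mul_left m ht; omega)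
    _ = m := div_top q m hq

/-- Existence of a digit position landing in the top r+1 slots after any shift. -/
private lemma aux_exists (q m r : ℕ) (hq : 3 ≤ q) (hm : 4 ≤ m)
    (h1 : r * (q - 1) ≤ m) (h2 : m ≤ r * (q - 1) + (q - 2)) (j' : ℕ) (hj' : j' < m) :
    ∃ t ∈ Finset.Icc 1 (q - 1),
      m - 1 - r ≤ ((m * t + q - 2) / (q - 1) - 1 + j') % m := by
  have hp0 : 0 < q - 1 := by omega
  have h2r : 2 * r ≤ m := by
    have : r * 2 ≤ r * (q - 1) := Nat.mul_le_mul_left r (by omega)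
    omega
  set c := m - 1 - j' with hc
  have hcm : c ≤ m - 1 := by omega
  have hj'c : j' = m - 1 - c := by omega
  -- bound on first exponent
  have hE1 : (m * 1 + q - 2) / (q - 1) < r + 2 := by
    rw [Nat.div_lt_iff_lt_mul hp0]
    have : (r + 2) * (q - 1) = r * (q - 1) + 2 * (q - 1) := by ring
    omega
  by_cases hcase : (m * 1 + q - 2) / (q - 1) - 1 ≤ c
  · -- find the greatest t with exponent ≤ c
    set P : ℕ → Prop := fun t => 1 ≤ t ∧ (m * t + q - 2) / (q - 1) - 1 ≤ c with hP
    have hP1 : P 1 := ⟨le_refl 1, hcase⟩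
    have hPt0 : P (Nat.findGreatest P (q - 1)) :=
      Nat.findGreatest_spec (by omega : 1 ≤ q - 1) hP1
    set t0 := Nat.findGreatest P (q - 1) with ht0
    have ht0le : t0 ≤ q - 1 := Nat.findGreatest_le _
    refine ⟨t0, Finset.mem_Icc.mpr ⟨hPt0.1, ht0le⟩, ?_⟩
    by_cases htop : t0 = q - 1
    · have hEt : (m * t0 + q - 2) / (q - 1) - 1 = m - 1 := by
        rw [htop, div_top q m hq]
      have hEc : m - 1 ≤ c := by rw [← hEt]; exact hPt0.2
      have hj0 : j' = 0 := by omega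
      rw [hEt, hj0, Nat.add_zero, Nat.mod_eq_of_lt (by omega)]
      omega
    · have hlt : t0 < q - 1 := lt_of_le_of_ne ht0le htop
      have hnP : ¬ P (t0 + 1) :=
        Nat.findGreatest_is_greatest (n := q - 1) (by omega) (by omega)
      have hEgt : c < (m * (t0 + 1) + q - 2) / (q - 1) - 1 := by
        by_contra h
        exact hnP ⟨by omega, by omega⟩
      -- step bound
      have hmle : m ≤ (r + 1) * (q - 1) := by
        have : (r + 1) * (q - 1) = r * (q - 1) + (q - 1) := by ring
        omega
      have hstep : (m * (t0 + 1) + q - 2) / (q - 1)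
          ≤ (m * t0 + q - 2) / (q - 1) + (r + 1) := by
        have harg : m * (t0 + 1) + q - 2 ≤ (m * t0 + q - 2) + (r + 1) * (q - 1) := by
          have : m * (t0 + 1) = m * t0 + m := by ring
          omega
        calc (m * (t0 + 1) + q - 2) / (q - 1)
            ≤ ((m * t0 + q - 2) + (r + 1) * (q - 1)) / (q - 1) :=
              Nat.div_le_div_right harg
          _ = (m * t0 + q - 2) / (q - 1) + (r + 1) :=
              Nat.add_mul_div_right _ _ hp0
      have hge1 : 1 ≤ (m * t0 + q - 2) / (q - 1) := by
        rw [Nat.one_le_div_iff hp0]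
        have : m * 1 ≤ m * t0 := Nat.mul_le_mul_left m hPt0.1
        omega
      have hEc : (m * t0 + q - 2) / (q - 1) - 1 ≤ c := hPt0.2
      rw [Nat.mod_eq_of_lt (by omega)]
      omega
  · -- wrap-around case: use t = q - 1
    push_neg at hcase
    refine ⟨q - 1, Finset.mem_Icc.mpr ⟨by omega, le_refl _⟩, ?_⟩
    have hEt : (m * (q - 1) + q - 2) / (q - 1) - 1 = m - 1 := by
      rw [div_top q m hq]
    rw [hEt]
    -- c < E1 ≤ r, so c ≤ r - 1 ≤ m - 3, j' ≥ 2
    have hcr : c + 1 ≤ r := by omega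
    have hrm2 : r ≤ m - 2 := by omega
    have hwrap : m - 1 + j' = m + (j' - 1) := by omega
    rw [hwrap, Nat.add_mod_left, Nat.mod_eq_of_lt (by omega)]
    omega

/-- Key lemma: all cyclic shifts of the digit pattern are at least q^(m-1-r). -/
private lemma aux_key (q m r : ℕ) (hq : 3 ≤ q) (hm : 4 ≤ m)
    (h1 : r * (q - 1) ≤ m) (h2 : m ≤ r * (q - 1) + (q - 2)) (j : ℕ) :
    q ^ (m - 1 - r) ≤
      ((∑ t ∈ Finset.Icc 1 (q - 1), q ^ ((m * t + q - 2) / (q - 1) - 1)) * q ^ j) %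
        (q ^ m - 1) := by
  have hm0 : 0 < m := by omega
  have hq0 : 0 < q := by omega
  set N := q ^ m - 1 with hN
  have hqm : 3 ≤ q ^ m := le_trans hq (Nat.le_self_pow (by omega) q)
  have hN0 : 0 < N := by omega
  have h1N : (q ^ m : ℕ) ≡ 1 [MOD N] := by
    show q ^ m % N = 1 % N
    rw [show q ^ m = N + 1 by omega, Nat.add_mod_left]
  have hpow : ∀ a : ℕ, q ^ a ≡ q ^ (a % m) [MOD N] := by
    intro a
    calc q ^ a = (q ^ m) ^ (a / m) * q ^ (a % m) := by
          rw [← pow_mul, ← pow_add, Nat.div_add_mod]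
      _ ≡ 1 ^ (a / m) * q ^ (a % m) [MOD N] := Nat.ModEq.mul_right _ (h1N.pow _)
      _ = q ^ (a % m) := by rw [one_pow, one_mul]
  have hcard : (Finset.Icc 1 (q - 1)).card = q - 1 := by
    rw [Nat.card_Icc]; omega
  -- the shifted sum
  set S := ∑ t ∈ Finset.Icc 1 (q - 1),
      q ^ (((m * t + q - 2) / (q - 1) - 1 + j) % m) with hS
  have hprod : (∑ t ∈ Finset.Icc 1 (q - 1), q ^ ((m * t + q - 2) / (q - 1) - 1)) * q ^ j
      = ∑ t ∈ Finset.Icc 1 (q - 1), q ^ ((m * t + q - 2) / (q - 1) - 1 + j) := by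
    rw [Finset.sum_mul]
    exact Finset.sum_congr rfl fun t _ => (pow_add q _ j).symm
  have hmodeq : (∑ t ∈ Finset.Icc 1 (q - 1), q ^ ((m * t + q - 2) / (q - 1) - 1 + j)) % N
      = S % N := by
    rw [Finset.sum_nat_mod, hS,
      Finset.sum_nat_mod (Finset.Icc 1 (q - 1)) N
        (fun t => q ^ (((m * t + q - 2) / (q - 1) - 1 + j) % m))]
    congr 1
    exact Finset.sum_congr rfl fun t _ => hpow _
  have hSle : S ≤ (q - 1) * q ^ (m - 1) := by
    calc S ≤ ∑ _t ∈ Finset.Icc 1 (q - 1), q ^ (m - 1) :=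
          Finset.sum_le_sum fun t _ =>
            Nat.pow_le_pow_right hq0 (by
              have := Nat.mod_lt ((m * t + q - 2) / (q - 1) - 1 + j) hm0
              omega)
      _ = (q - 1) * q ^ (m - 1) := by
          rw [Finset.sum_const, hcard, smul_eq_mul]
  have hSlt : S < N := lt_of_le_of_lt hSle (geom_bound q m hq (by omega))
  -- locate a big digit
  obtain ⟨t0, ht0mem, ht0⟩ := aux_exists q m r hq hm h1 h2 (j % m) (Nat.mod_lt j hm0)
  have hshift : ((m * t0 + q - 2) / (q - 1) - 1 + j % m) % m
      = ((m * t0 + q - 2) / (q - 1) - 1 + j) % m :=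
    Nat.ModEq.add_left _ (Nat.mod_modEq j m)
  have hbig : q ^ (m - 1 - r) ≤ S := by
    calc q ^ (m - 1 - r) ≤ q ^ (((m * t0 + q - 2) / (q - 1) - 1 + j) % m) :=
          Nat.pow_le_pow_right hq0 (by rw [← hshift]; exact ht0)
      _ ≤ S :=
          Finset.single_le_sum
            (f := fun t => q ^ (((m * t + q - 2) / (q - 1) - 1 + j) % m))
            (fun t _ => Nat.zero_le _) ht0mem
  rw [hprod, hmodeq, Nat.mod_eq_of_lt hSlt]
  exact hbig

theorem stmt_19 (q m r s : ℕ) (hq : IsPrimePow q) (hq3 : 3 ≤ q) (hm : 4 ≤ m)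
    (hdecomp : m = r * (q - 1) + s) (hs : s ≤ q - 2) :
    (q ^ (m - r - 1) - 1) / (q - 1) <
      sInf {x : ℕ | ∃ j : ℕ,
        x = (((q ^ m - 1) / (q - 1) -
              (q ^ m - (∑ t ∈ Finset.Icc 1 (q - 1), q ^ ((m * t + q - 2) / (q - 1) - 1)) - 1) /
                (q - 1)) *
            q ^ j) % ((q ^ m - 1) / (q - 1))} := by
  have hp0 : 0 < q - 1 := by omega
  have h1 : r * (q - 1) ≤ m := by omega
  have h2 : m ≤ r * (q - 1) + (q - 2) := by omega
  set B := ∑ t ∈ Finset.Icc 1 (q - 1), q ^ ((m * t + q - 2) / (q - 1) - 1) with hB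
  have hcard : (Finset.Icc 1 (q - 1)).card = q - 1 := by
    rw [Nat.card_Icc]; omega
  have hBle : B ≤ (q - 1) * q ^ (m - 1) := by
    calc B ≤ ∑ _t ∈ Finset.Icc 1 (q - 1), q ^ (m - 1) :=
          Finset.sum_le_sum fun t ht =>
            Nat.pow_le_pow_right (by omega)
              (by
                have := div_le_top q m t hq3 (Finset.mem_Icc.mp ht).2
                omega)
      _ = (q - 1) * q ^ (m - 1) := by rw [Finset.sum_const, hcard, smul_eq_mul]
  have hBlt : B < q ^ m - 1 := lt_of_le_of_lt hBle (geom_bound q m hq3 (by omega))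
  have hdvd1 : (q - 1) ∣ q ^ m - 1 := by
    simpa using Nat.sub_dvd_pow_sub_pow q 1 m
  -- B is divisible by q - 1
  have hqmod : q % (q - 1) = 1 := by
    rw [Nat.mod_eq_sub_mod (by omega), show q - (q - 1) = 1 by omega,
      Nat.mod_eq_of_lt (by omega)]
  have hpowmod : ∀ e : ℕ, q ^ e % (q - 1) = 1 := fun e => by
    rw [Nat.pow_mod, hqmod, one_pow, Nat.mod_eq_of_lt (by omega)]
  have hdvdB : (q - 1) ∣ B := by
    apply Nat.dvd_of_mod_eq_zero
    rw [hB, Finset.sum_nat_mod,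
      Finset.sum_congr rfl (fun t _ => hpowmod ((m * t + q - 2) / (q - 1) - 1)),
      Finset.sum_const, hcard, smul_eq_mul, mul_one, Nat.mod_self]
  have hpn : (q - 1) * ((q ^ m - 1) / (q - 1)) = q ^ m - 1 := Nat.mul_div_cancel' hdvd1
  have hdvd2 : (q - 1) ∣ (q ^ m - B - 1) := by
    rw [show q ^ m - B - 1 = (q ^ m - 1) - B by omega]
    exact Nat.dvd_sub hdvd1 hdvdB
  have hpd : (q - 1) * ((q ^ m - B - 1) / (q - 1)) = q ^ m - B - 1 :=
    Nat.mul_div_cancel' hdvd2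
  have hpA : (q - 1) * ((q ^ m - 1) / (q - 1) - (q ^ m - B - 1) / (q - 1)) = B := by
    rw [Nat.mul_sub]
    omega
  -- reduce to the key lemma via the minimum element
  have hne : ({x : ℕ | ∃ j : ℕ,
      x = (((q ^ m - 1) / (q - 1) - (q ^ m - B - 1) / (q - 1)) * q ^ j) %
        ((q ^ m - 1) / (q - 1))}).Nonempty := ⟨_, 0, rfl⟩
  obtain ⟨j, hj⟩ := Nat.sInf_mem hne
  rw [hj]
  set x := (((q ^ m - 1) / (q - 1) - (q ^ m - B - 1) / (q - 1)) * q ^ j) %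
      ((q ^ m - 1) / (q - 1)) with hx
  have hxp : (q - 1) * x = (B * q ^ j) % (q ^ m - 1) := by
    rw [hx, ← Nat.mul_mod_mul_left, ← mul_assoc, hpA, hpn]
  have hkey := aux_key q m r hq3 hm h1 h2 j
  have hmr : m - r - 1 = m - 1 - r := by omega
  rw [hmr]
  by_contra hcon
  push_neg at hcon
  have h5 : (q - 1) * x ≤ (q - 1) * ((q ^ (m - 1 - r) - 1) / (q - 1)) :=
    Nat.mul_le_mul_left _ hcon
  have h6 : (q - 1) * ((q ^ (m - 1 - r) - 1) / (q - 1)) ≤ q ^ (m - 1 - r) - 1 :=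
    Nat.mul_div_le _ _
  have h7 : 0 < q ^ (m - 1 - r) := Nat.pow_pos (by omega)
  have : q ^ (m - 1 - r) < q ^ (m - 1 - r) := by
    calc q ^ (m - 1 - r) ≤ (B * q ^ j) % (q ^ m - 1) := hkey
      _ = (q - 1) * x := hxp.symm
      _ ≤ (q - 1) * ((q ^ (m - 1 - r) - 1) / (q - 1)) := h5
      _ ≤ q ^ (m - 1 - r) - 1 := h6
      _ < q ^ (m - 1 - r) := Nat.sub_lt h7 one_pos
  exact lt_irrefl _ this
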